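/- arXiv:2012.07399 — 3 statements merged into one kernel-verified Lean document; each statement's English description precedes it below -/
import Mathlib

section
/- Let ρ₁ and ρ₂ be non-atomic Borel probability measures on [0,∞) with finite first moments, let W : [0,1] → [0,∞) be bounded and measurable, and set K_W(t) = ∫_0^t W(u) du. Then Φ_W(ρ₁) − Φ_W(ρ₂) = −∫_0^∞ ( K_W(F_{ρ₁}(r)) − K_W(F_{ρ₂}(r)) ) dr. -/
open MeasureTheory Set

/-- The cumulative distribution function `F_ρ(r) = ρ([0,r])` (as `ρ` is supported on `[0,∞)`,
`ρ((-∞,r]) = ρ([0,r])`). -/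
noncomputable def cdf (ρ : Measure ℝ) (r : ℝ) : ℝ := (ρ (Iic r)).toReal

/-- The robust functional `Φ_W(ρ) = ∫ r W(F_ρ(r)) dρ(r)`. -/
noncomputable def PhiW (W : ℝ → ℝ) (ρ : Measure ℝ) : ℝ := ∫ r, r * W (cdf ρ r) ∂ρ

lemma cdf_nonneg (ρ : Measure ℝ) (r : ℝ) : 0 ≤ cdf ρ r := ENNReal.toReal_nonneg

lemma cdf_le_one (ρ : Measure ℝ) [IsProbabilityMeasure ρ] (r : ℝ) : cdf ρ r ≤ 1 := by
  have h : ρ (Iic r) ≤ ENNReal.ofReal 1 := by simpa using prob_le_one (μ := ρ) (s := Iic r)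
  exact (ENNReal.le_ofReal_iff_toReal_le (measure_ne_top _ _) zero_le_one).1 h

lemma cdf_mono (ρ : Measure ℝ) [IsProbabilityMeasure ρ] : Monotone (cdf ρ) := fun a b hab =>
  ENNReal.toReal_mono (measure_ne_top _ _) (measure_mono (Iic_subset_Iic.2 hab))

lemma measurable_cdf (ρ : Measure ℝ) [IsProbabilityMeasure ρ] : Measurable (cdf ρ) :=
  (cdf_mono ρ).measurable

lemma ofReal_cdf (ρ : Measure ℝ) [IsProbabilityMeasure ρ] (r : ℝ) :
    ENNReal.ofReal (cdf ρ r) = ρ (Iic r) := ENNReal.ofReal_toReal (measure_ne_top _ _)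

lemma cdf_map (ρ : Measure ℝ) [IsProbabilityMeasure ρ] [NullSingletonClass ρ] (hs : ρ (Iio 0) = 0) :
    Measure.map (cdf ρ) ρ = volume.restrict (Ioc (0:ℝ) 1) := by
  have hF : Measurable (cdf ρ) := measurable_cdf ρ
  have : IsProbabilityMeasure (Measure.map (cdf ρ) ρ) := Measure.isProbabilityMeasure_map hF.aemeasurable
  refine Measure.ext_of_Iic _ _ (fun t => ?_)
  rw [Measure.map_apply hF measurableSet_Iic, Measure.restrict_apply measurableSet_Iic]
  rcases lt_or_ge t 0 with ht | ht
  · have h1 : cdf ρ ⁻¹' (Iic t) = ∅ := by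
      ext r; simp only [mem_preimage, mem_Iic, mem_empty_iff_false, iff_false, not_le]
      exact lt_of_lt_of_le ht (cdf_nonneg ρ r)
    have h2 : Iic t ∩ Ioc (0:ℝ) 1 = ∅ := by
      ext x; simp only [mem_inter_iff, mem_Iic, mem_Ioc, mem_empty_iff_false, iff_false]
      rintro ⟨h, h0, -⟩; linarith
    simp [h1, h2]
  rcases le_or_gt 1 t with ht1 | ht1
  · have h1 : cdf ρ ⁻¹' (Iic t) = univ :=
      eq_univ_of_forall fun r => (cdf_le_one ρ r).trans ht1
    have h2 : Iic t ∩ Ioc (0:ℝ) 1 = Ioc 0 1 :=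
      inter_eq_self_of_subset_right (fun x hx => hx.2.trans ht1)
    rw [h1, h2]
    simp [Real.volume_Ioc]
  · -- 0 ≤ t < 1
    set S := {r : ℝ | cdf ρ r ≤ t} with hS
    have hne : (-1 : ℝ) ∈ S := by
      have hsub : Iic (-1:ℝ) ⊆ Iio 0 := fun x hx =>
        mem_Iio.2 (lt_of_le_of_lt (mem_Iic.1 hx) (by norm_num))
      have hρ : ρ (Iic (-1:ℝ)) = 0 := measure_mono_null hsub hs
      simp only [hS, mem_setOf_eq, cdf, hρ, ENNReal.toReal_zero]
      exact ht
    have hbdd : BddAbove S := by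
      have h1 : Filter.Tendsto (fun r => ρ (Iic r)) Filter.atTop (nhds (ρ univ)) :=
        tendsto_measure_Iic_atTop ρ
      have : ∀ᶠ r in Filter.atTop, ENNReal.ofReal t < ρ (Iic r) := by
        refine h1.eventually_const_lt ?_
        rw [measure_univ]
        exact ENNReal.ofReal_lt_one.2 ht1
      obtain ⟨r₀, hr₀⟩ := this.exists
      refine ⟨r₀, fun x hx => ?_⟩
      by_contra hlt
      push_neg at hlt
      have h2 : ρ (Iic r₀) ≤ ρ (Iic x) := measure_mono (Iic_subset_Iic.2 hlt.le)
      have h3 : ENNReal.ofReal t < ρ (Iic x) := lt_of_lt_of_le hr₀ h2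
      have h4 : ρ (Iic x) ≤ ENNReal.ofReal t :=
        (ENNReal.le_ofReal_iff_toReal_le (measure_ne_top _ _) ht).2 hx
      exact absurd h4 (not_le.2 h3)
    set a := sSup S with ha
    have hlt : ∀ x, x < a → ρ (Iic x) ≤ ENNReal.ofReal t := by
      intro x hx
      obtain ⟨y, hyS, hxy⟩ := exists_lt_of_lt_csSup ⟨_, hne⟩ hx
      have hcx : cdf ρ x ≤ t := le_trans (cdf_mono ρ hxy.le) hyS
      exact (ENNReal.le_ofReal_iff_toReal_le (measure_ne_top _ _) ht).2 hcx
    have haS : ρ (Iic a) ≤ ENNReal.ofReal t := by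
      have hIio : ρ (Iio a) ≤ ENNReal.ofReal t := by
        have hmon : Monotone (fun n : ℕ => Iic (a - 1/(n+1))) := by
          intro m n hmn
          apply Iic_subset_Iic.2
          have h5 : (1:ℝ)/(n+1) ≤ 1/(m+1) := by
            apply one_div_le_one_div_of_le (by positivity)
            have : (m:ℝ) ≤ n := by exact_mod_cast hmn
            linarith
          linarith
        have hun : ⋃ n : ℕ, Iic (a - 1/(n+1)) = Iio a := by
          ext x
          simp only [mem_iUnion, mem_Iic, mem_Iio]
          constructor
          · rintro ⟨n, hn⟩
            have : (0:ℝ) < 1/(n+1) := by positivity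
            linarith
          · intro hx
            obtain ⟨n, hn⟩ := exists_nat_one_div_lt (sub_pos.2 hx)
            exact ⟨n, by linarith⟩
        have htd := tendsto_measure_iUnion_atTop (μ := ρ) hmon
        rw [hun] at htd
        refine le_of_tendsto' htd (fun n => hlt _ ?_)
        have : (0:ℝ) < 1/(n+1) := by positivity
        linarith
      calc ρ (Iic a) = ρ (Iio a) := (measure_congr Iio_ae_eq_Iic).symm
        _ ≤ _ := hIio
    have hat : ENNReal.ofReal t ≤ ρ (Iic a) := by
      have hgt : ∀ x, a < x → ENNReal.ofReal t ≤ ρ (Iic x) := by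
        intro x hx
        have hxS : x ∉ S := fun h => absurd (le_csSup hbdd h) (not_le.2 hx)
        have hcx : t ≤ cdf ρ x := le_of_not_ge hxS
        exact ENNReal.ofReal_le_of_le_toReal hcx
      have hant : Antitone (fun n : ℕ => Iic (a + 1/(n+1))) := by
        intro m n hmn
        apply Iic_subset_Iic.2
        have h5 : (1:ℝ)/(n+1) ≤ 1/(m+1) := by
          apply one_div_le_one_div_of_le (by positivity)
          have : (m:ℝ) ≤ n := by exact_mod_cast hmn
          linarith
        linarith
      have hin : ⋂ n : ℕ, Iic (a + 1/(n+1)) = Iic a := by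
        ext x
        simp only [mem_iInter, mem_Iic]
        constructor
        · intro hx
          by_contra hxa
          push_neg at hxa
          obtain ⟨n, hn⟩ := exists_nat_one_div_lt (sub_pos.2 hxa)
          have := hx n
          linarith
        · intro hx n
          have : (0:ℝ) < 1/(n+1) := by positivity
          linarith
      have htd := tendsto_measure_iInter_atTop (μ := ρ)
        (fun n => measurableSet_Iic.nullMeasurableSet) hant ⟨0, measure_ne_top _ _⟩
      rw [hin] at htd
      refine ge_of_tendsto' htd (fun n => hgt _ ?_)
      have : (0:ℝ) < 1/(n+1) := by positivity
      linarith
    have hpre : cdf ρ ⁻¹' (Iic t) = Iic a := by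
      ext x
      simp only [mem_preimage, mem_Iic]
      constructor
      · intro hx
        exact le_csSup hbdd hx
      · intro hx
        have h6 : ρ (Iic x) ≤ ENNReal.ofReal t :=
          le_trans (measure_mono (Iic_subset_Iic.2 hx)) haS
        exact (ENNReal.le_ofReal_iff_toReal_le (measure_ne_top _ _) ht).1 h6
    rw [hpre, le_antisymm haS hat]
    have h2 : Iic t ∩ Ioc (0:ℝ) 1 = Ioc 0 t := by
      ext x
      simp only [mem_inter_iff, mem_Iic, mem_Ioc]
      constructor
      · rintro ⟨h1, h2, h3⟩
        exact ⟨h2, h1⟩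
      · rintro ⟨h1, h2⟩
        exact ⟨h2, h1, by linarith⟩
    rw [h2, Real.volume_Ioc]
    simp

lemma null_flat (ρ : Measure ℝ) [IsProbabilityMeasure ρ] [NullSingletonClass ρ] (s : ℝ) :
    ρ {r | s < r ∧ cdf ρ r ≤ cdf ρ s} = 0 := by
  set N := {r | s < r ∧ cdf ρ r ≤ cdf ρ s} with hN
  have hI : ∀ x ∈ N, ∀ y, s < y → y ≤ x → y ∈ N := fun x hx y hy hyx =>
    ⟨hy, (cdf_mono ρ hyx).trans hx.2⟩
  have hIoc : ∀ x ∈ N, ρ (Ioc s x) = 0 := by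
    intro x hx
    have h1 : ρ (Iic x) ≤ ρ (Iic s) :=
      (ENNReal.toReal_le_toReal (measure_ne_top _ _) (measure_ne_top _ _)).1 hx.2
    have h2 : ρ (Iic s) + ρ (Ioc s x) = ρ (Iic x) := by
      rw [← measure_union (Iic_disjoint_Ioc le_rfl) measurableSet_Ioc,
        Iic_union_Ioc_eq_Iic hx.1.le]
    have h3 : ρ (Iic s) + ρ (Ioc s x) ≤ ρ (Iic s) + 0 := by
      rw [add_zero, h2]; exact h1
    have h4 := (ENNReal.add_le_add_iff_left (measure_ne_top _ _)).1 h3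
    exact le_antisymm h4 zero_le
  set D := {x ∈ N | ∀ q : ℚ, (q:ℝ) ∈ N → ¬ x ≤ (q:ℝ)} with hD
  have hDsub : D.Subsingleton := by
    intro x hx y hy
    by_contra hxy
    rcases lt_or_gt_of_ne hxy with h | h
    · obtain ⟨q, hq1, hq2⟩ := exists_rat_btwn h
      exact hx.2 q (hI y hy.1 q (lt_trans hx.1.1 hq1) hq2.le) hq1.le
    · obtain ⟨q, hq1, hq2⟩ := exists_rat_btwn h
      exact hy.2 q (hI x hx.1 q (lt_trans hy.1.1 hq1) hq2.le) hq1.le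
  have hcover : N ⊆ D ∪ ⋃ q : ℚ, (if (q:ℝ) ∈ N then Ioc s (q:ℝ) else ∅) := by
    intro x hx
    by_cases h : ∃ q : ℚ, (q:ℝ) ∈ N ∧ x ≤ (q:ℝ)
    · obtain ⟨q, hq1, hq2⟩ := h
      refine Or.inr (mem_iUnion.2 ⟨q, ?_⟩)
      rw [if_pos hq1]
      exact ⟨hx.1, hq2⟩
    · push_neg at h
      exact Or.inl ⟨hx, fun q hq => not_le.2 (h q hq)⟩
  refine measure_mono_null hcover (measure_union_null (hDsub.countable.measure_zero ρ) ?_)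
  refine measure_iUnion_null (fun q => ?_)
  by_cases h : (q:ℝ) ∈ N
  · rw [if_pos h]; exact hIoc _ h
  · rw [if_neg h]; exact measure_empty

lemma lintegral_tail (ρ : Measure ℝ) [IsProbabilityMeasure ρ] [NullSingletonClass ρ]
    (hs : ρ (Iio 0) = 0) {W : ℝ → ℝ} (hW : Measurable W) (s : ℝ) :
    ∫⁻ r in Ioi s, ENNReal.ofReal (W (cdf ρ r)) ∂ρ
      = ∫⁻ u in Ioc (cdf ρ s) 1, ENNReal.ofReal (W u) := by
  have hF : Measurable (cdf ρ) := measurable_cdf ρ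
  rw [← lintegral_indicator measurableSet_Ioi]
  have hae : (Ioi s).indicator (fun r => ENNReal.ofReal (W (cdf ρ r)))
      =ᵐ[ρ] fun r => (Ioi (cdf ρ s)).indicator (fun u => ENNReal.ofReal (W u)) (cdf ρ r) := by
    filter_upwards [measure_eq_zero_iff_ae_notMem.1 (null_flat ρ s)] with r hr
    by_cases h : cdf ρ s < cdf ρ r
    · have hrs : s < r := lt_of_not_ge fun hle => absurd (cdf_mono ρ hle) (not_le.2 h)
      rw [indicator_of_mem (mem_Ioi.2 hrs), indicator_of_mem (mem_Ioi.2 h)]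
    · have hrs : r ∉ Ioi s := fun hmem => hr ⟨mem_Ioi.1 hmem, not_lt.1 h⟩
      rw [indicator_of_notMem hrs, indicator_of_notMem (fun hmem => h (mem_Ioi.1 hmem))]
  rw [lintegral_congr_ae hae,
    ← lintegral_map (hW.ennreal_ofReal.indicator measurableSet_Ioi) hF,
    cdf_map ρ hs, lintegral_indicator measurableSet_Ioi,
    Measure.restrict_restrict measurableSet_Ioi]
  have hset : Ioi (cdf ρ s) ∩ Ioc (0:ℝ) 1 = Ioc (cdf ρ s) 1 := by
    ext x
    simp only [mem_inter_iff, mem_Ioi, mem_Ioc]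
    constructor
    · rintro ⟨h1, h2, h3⟩
      exact ⟨h1, h3⟩
    · rintro ⟨h1, h2⟩
      exact ⟨h1, lt_of_le_of_lt (cdf_nonneg ρ s) h1, h2⟩
  rw [hset]

lemma phi_repr (ρ : Measure ℝ) [IsProbabilityMeasure ρ] [NullSingletonClass ρ]
    (hs : ρ (Iio 0) = 0) (hint : Integrable (fun r : ℝ => r) ρ)
    (W : ℝ → ℝ) (hWmeas : Measurable W) (hWnn : ∀ t ∈ Icc (0 : ℝ) 1, 0 ≤ W t)
    (B : ℝ) (hWbd : ∀ t ∈ Icc (0 : ℝ) 1, W t ≤ B) :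
    IntegrableOn (fun s => (∫ u in (0:ℝ)..1, W u) - ∫ u in (0:ℝ)..(cdf ρ s), W u) (Ioi 0) ∧
    PhiW W ρ = ∫ s in Ioi (0:ℝ),
      ((∫ u in (0:ℝ)..1, W u) - ∫ u in (0:ℝ)..(cdf ρ s), W u) := by
  have hcdf_mem : ∀ r, cdf ρ r ∈ Icc (0:ℝ) 1 := fun r => ⟨cdf_nonneg ρ r, cdf_le_one ρ r⟩
  have hWint : IntegrableOn W (Icc (0:ℝ) 1) := by
    refine Integrable.mono' (integrable_const B) hWmeas.aestronglyMeasurable ?_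
    filter_upwards [ae_restrict_mem measurableSet_Icc] with u hu
    rw [Real.norm_eq_abs, abs_of_nonneg (hWnn u hu)]
    exact hWbd u hu
  have hWti : ∀ t ∈ Icc (0:ℝ) 1, IntervalIntegrable W volume 0 t := by
    intro t ht
    refine (hWint.mono_set ?_).intervalIntegrable
    rw [uIcc_of_le ht.1]
    exact Icc_subset_Icc le_rfl ht.2
  set K : ℝ → ℝ := fun t => ∫ u in (0:ℝ)..t, W u with hK
  have hKmono : ∀ a ∈ Icc (0:ℝ) 1, ∀ b ∈ Icc (0:ℝ) 1, a ≤ b → K a ≤ K b := by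
    intro a ha b hb hab
    rw [← sub_nonneg, hK]
    simp only
    rw [intervalIntegral.integral_interval_sub_left (hWti b hb) (hWti a ha)]
    exact intervalIntegral.integral_nonneg hab
      (fun u hu => hWnn u ⟨le_trans ha.1 hu.1, le_trans hu.2 hb.2⟩)
  set h : ℝ → ℝ := fun s => K 1 - K (cdf ρ s) with hh
  have hmonoh : Monotone (fun s => K (cdf ρ s)) := fun x y hxy =>
    hKmono _ (hcdf_mem x) _ (hcdf_mem y) (cdf_mono ρ hxy)
  have hhmeas : Measurable h := measurable_const.sub hmonoh.measurable
  have hhnn : ∀ s, 0 ≤ h s := fun s =>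
    sub_nonneg.2 (hKmono _ (hcdf_mem s) 1 ⟨zero_le_one, le_rfl⟩ (cdf_le_one ρ s))
  have hofReal : ∀ s : ℝ,
      ENNReal.ofReal (h s) = ∫⁻ u in Ioc (cdf ρ s) 1, ENNReal.ofReal (W u) := by
    intro s
    have hsub : Ioc (cdf ρ s) 1 ⊆ Icc (0:ℝ) 1 :=
      fun u hu => ⟨le_trans (cdf_nonneg ρ s) hu.1.le, hu.2⟩
    have h1 : h s = ∫ u in Ioc (cdf ρ s) 1, W u := by
      rw [hh]
      simp only
      rw [intervalIntegral.integral_interval_sub_left (hWti 1 ⟨zero_le_one, le_rfl⟩)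
        (hWti _ (hcdf_mem s)), intervalIntegral.integral_of_le (cdf_le_one ρ s)]
    rw [h1]
    refine ofReal_integral_eq_lintegral_ofReal (hWint.mono_set hsub) ?_
    filter_upwards [ae_restrict_mem measurableSet_Ioc] with u hu
    exact hWnn u (hsub hu)
  set G : ℝ → ENNReal := fun r => ENNReal.ofReal (W (cdf ρ r)) with hG
  have hGmeas : Measurable G := (hWmeas.comp (measurable_cdf ρ)).ennreal_ofReal
  have hGle : ∀ r, G r ≤ ENNReal.ofReal B :=
    fun r => ENNReal.ofReal_le_ofReal (hWbd _ (hcdf_mem r))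
  set I : ENNReal := ∫⁻ r, ENNReal.ofReal r * G r ∂ρ with hI
  have harnn : ∀ᵐ r ∂ρ, (0:ℝ) ≤ r := by
    filter_upwards [measure_eq_zero_iff_ae_notMem.1 hs] with r hr
    simpa using hr
  have hstepa : PhiW W ρ = I.toReal := by
    rw [PhiW, integral_eq_lintegral_of_nonneg_ae ?pos ?meas]
    case pos =>
      filter_upwards [harnn] with r hr
      exact mul_nonneg hr (hWnn _ (hcdf_mem r))
    case meas =>
      exact (measurable_id.mul (hWmeas.comp (measurable_cdf ρ))).aestronglyMeasurable
    congr 1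
    refine lintegral_congr_ae ?_
    filter_upwards [harnn] with r hr
    rw [ENNReal.ofReal_mul hr]
  have hIfin : I < ⊤ := by
    have h1 : I ≤ (∫⁻ r, ENNReal.ofReal r ∂ρ) * ENNReal.ofReal B :=
      calc I ≤ ∫⁻ r, ENNReal.ofReal r * ENNReal.ofReal B ∂ρ :=
            lintegral_mono fun r => mul_le_mul_right (hGle r) _
        _ = (∫⁻ r, ENNReal.ofReal r ∂ρ) * ENNReal.ofReal B :=
            lintegral_mul_const _ (Measurable.ennreal_ofReal measurable_id)
    have h2 : ∫⁻ r, ENNReal.ofReal r ∂ρ ≤ ∫⁻ r, ‖r‖ₑ ∂ρ := by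
      refine lintegral_mono fun r => ?_
      rw [Real.enorm_eq_ofReal_abs]
      exact ENNReal.ofReal_le_ofReal (le_abs_self r)
    have h3 : ∫⁻ r, ‖r‖ₑ ∂ρ < ⊤ := hint.hasFiniteIntegral
    calc I ≤ _ := h1
      _ < ⊤ := ENNReal.mul_lt_top (lt_of_le_of_lt h2 h3) ENNReal.ofReal_lt_top
  have hofr : ∀ r : ℝ, (volume.restrict (Ioi (0:ℝ))) (Iio r) = ENNReal.ofReal r := by
    intro r
    rw [Measure.restrict_apply measurableSet_Iio, Iio_inter_Ioi, Real.volume_Ioo]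
    simp
  have hstepb : I = ∫⁻ s in Ioi (0:ℝ), ∫⁻ r in Ioi s, G r ∂ρ := by
    have h1 : ∀ r, ENNReal.ofReal r * G r = ∫⁻ s in Ioi (0:ℝ),
        {p : ℝ × ℝ | p.2 < p.1}.indicator (fun p => G p.1) (r, s) := by
      intro r
      have he : ∀ s, {p : ℝ × ℝ | p.2 < p.1}.indicator (fun p => G p.1) (r, s)
          = (Iio r).indicator (fun _ => G r) s := by
        intro s
        by_cases hrs : s < r <;>
          simp [Set.indicator_apply, Set.mem_setOf_eq, hrs]
      simp_rw [he]
      rw [lintegral_indicator_const measurableSet_Iio, hofr, mul_comm]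
    calc I = ∫⁻ r, (∫⁻ s in Ioi (0:ℝ),
          {p : ℝ × ℝ | p.2 < p.1}.indicator (fun p => G p.1) (r, s)) ∂ρ := by
            rw [hI]; exact lintegral_congr (μ := ρ) h1
      _ = ∫⁻ s in Ioi (0:ℝ), ∫⁻ r,
          {p : ℝ × ℝ | p.2 < p.1}.indicator (fun p => G p.1) (r, s) ∂ρ := by
            refine lintegral_lintegral_swap (μ := ρ) (ν := volume.restrict (Ioi (0:ℝ)))
              (f := fun r s => {p : ℝ × ℝ | p.2 < p.1}.indicator (fun p => G p.1) (r, s)) ?_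
            have huc : (Function.uncurry fun (r s : ℝ) =>
                {p : ℝ × ℝ | p.2 < p.1}.indicator (fun p => G p.1) (r, s))
                = {p : ℝ × ℝ | p.2 < p.1}.indicator (fun p => G p.1) := rfl
            rw [huc]
            exact ((hGmeas.comp measurable_fst).indicator
              (measurableSet_lt measurable_snd measurable_fst)).aemeasurable
      _ = ∫⁻ s in Ioi (0:ℝ), ∫⁻ r in Ioi s, G r ∂ρ := by
            refine lintegral_congr fun s => ?_
            have he : ∀ r, {p : ℝ × ℝ | p.2 < p.1}.indicator (fun p => G p.1) (r, s)
                = (Ioi s).indicator G r := by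
              intro r
              by_cases hrs : s < r <;>
                simp [Set.indicator_apply, Set.mem_setOf_eq, hrs]
            simp_rw [he]
            rw [lintegral_indicator measurableSet_Ioi]
  have hstepc : I = ∫⁻ s in Ioi (0:ℝ), ENNReal.ofReal (h s) := by
    rw [hstepb]
    refine lintegral_congr fun s => ?_
    rw [lintegral_tail ρ hs hWmeas s, hofReal s]
  have hhint : IntegrableOn h (Ioi (0:ℝ)) := by
    refine ⟨hhmeas.aestronglyMeasurable, ?_⟩
    rw [hasFiniteIntegral_iff_ofReal (ae_of_all _ hhnn)]
    rw [← hstepc]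
    exact hIfin
  have hfinal : PhiW W ρ = ∫ s in Ioi (0:ℝ), h s := by
    rw [hstepa, hstepc,
      integral_eq_lintegral_of_nonneg_ae (ae_of_all _ hhnn) hhmeas.aestronglyMeasurable]
  exact ⟨hhint, hfinal⟩

/-- `Φ_W(ρ₁) - Φ_W(ρ₂) = -∫_0^∞ (K_W(F_{ρ₁}(r)) - K_W(F_{ρ₂}(r))) dr`,
where `K_W(t) = ∫_0^t W(u) du`, for non-atomic Borel probability measures on `[0,∞)`
with finite first moments and `W : [0,1] → [0,∞)` bounded and measurable. -/
theorem PhiW_difference_formula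
    (ρ₁ ρ₂ : Measure ℝ) [IsProbabilityMeasure ρ₁] [IsProbabilityMeasure ρ₂]
    [NullSingletonClass ρ₁] [NullSingletonClass ρ₂]
    (hs₁ : ρ₁ (Iio 0) = 0) (hs₂ : ρ₂ (Iio 0) = 0)
    (hint₁ : Integrable (fun r : ℝ => r) ρ₁) (hint₂ : Integrable (fun r : ℝ => r) ρ₂)
    (W : ℝ → ℝ) (hWmeas : Measurable W) (hWnn : ∀ t ∈ Icc (0 : ℝ) 1, 0 ≤ W t)
    (B : ℝ) (hWbd : ∀ t ∈ Icc (0 : ℝ) 1, W t ≤ B) :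
    PhiW W ρ₁ - PhiW W ρ₂ =
      -∫ r in Ioi (0 : ℝ),
        ((∫ u in (0 : ℝ)..(cdf ρ₁ r), W u) - ∫ u in (0 : ℝ)..(cdf ρ₂ r), W u) := by
  obtain ⟨hi1, he1⟩ := phi_repr ρ₁ hs₁ hint₁ W hWmeas hWnn B hWbd
  obtain ⟨hi2, he2⟩ := phi_repr ρ₂ hs₂ hint₂ W hWmeas hWnn B hWbd
  rw [he1, he2, ← integral_sub hi1 hi2, ← integral_neg]
  exact integral_congr_ae (Filter.Eventually.of_forall fun r => by ring)
end

section
/- Let ζ ∈ (0,1), let W = ζ^{-1} 1_{[0,ζ]} be the hard-threshold weight, and let ρ be a non-atomic Borel probability measure on [0,∞) with finite first moment such that q = F_ρ^{-1}(ζ) is the unique point with F_ρ(q) = ζ. Then for every R ≥ 0 the quantity ζ^{-1} ∫_0^q ( F_ρ(r) − 1_{[R,∞)}(r) ) dr (the influence function of Φ_W at ρ in direction R) equals ζ^{-1}( R + (ζ−1) q ) − Φ_W(ρ) if 0 ≤ R ≤ q, and equals q − Φ_W(ρ) if R > q; in both cases it is at most q − Φ_W(ρ). -/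
open MeasureTheory Set
open scoped ENNReal

/-- The quantile function `F_ρ⁻¹(ζ) = inf { r ≥ 0 : F_ρ(r) ≥ ζ }`. -/
noncomputable def quant (ρ : Measure ℝ) (ζ : ℝ) : ℝ := sInf {r : ℝ | 0 ≤ r ∧ ζ ≤ cdf ρ r}

/-- The hard-threshold weight `W = ζ⁻¹ 1_{[0,ζ]}`. -/
noncomputable def hardW (ζ : ℝ) : ℝ → ℝ := fun t => if t ≤ ζ then ζ⁻¹ else 0

lemma key_fubini (ρ : Measure ℝ) [IsProbabilityMeasure ρ]
    (hsupp : ρ (Iio 0) = 0) (hint : Integrable (fun r : ℝ => r) ρ)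
    (q : ℝ) (hq0 : 0 ≤ q) :
    ∫ r in Ioc (0:ℝ) q, cdf ρ r = q * (ρ (Iic q)).toReal - ∫ t in Iic q, t ∂ρ := by
  have hmono : Monotone (cdf ρ) := fun a b hab =>
    ENNReal.toReal_mono (measure_ne_top ρ _) (measure_mono (Iic_subset_Iic.2 hab))
  have hcdf_meas : Measurable (cdf ρ) := hmono.measurable
  have hcdf_le_one : ∀ r, cdf ρ r ≤ 1 := fun r => by
    have := ENNReal.toReal_mono (measure_ne_top ρ univ) (measure_mono (subset_univ (Iic r)))
    simpa [cdf, measure_univ] using this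
  have hint_cdf : IntegrableOn (cdf ρ) (Ioc 0 q) volume := by
    refine Integrable.mono' (integrable_const 1) hcdf_meas.aestronglyMeasurable ?_
    filter_upwards with r
    have h0 : (0:ℝ) ≤ cdf ρ r := ENNReal.toReal_nonneg
    rw [Real.norm_eq_abs, abs_of_nonneg h0]
    exact hcdf_le_one r
  -- Fubini on the lintegral level
  have hswap : ∫⁻ r in Ioc (0:ℝ) q, ρ (Iic r) = ∫⁻ t, volume (Ici t ∩ Ioc 0 q) ∂ρ := by
    have hmeas : AEMeasurable (Function.uncurry
        (fun r t => ({p : ℝ × ℝ | p.2 ≤ p.1}.indicator (fun _ => (1 : ℝ≥0∞)) (r, t))))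
        ((volume.restrict (Ioc 0 q)).prod ρ) := by
      refine (Measurable.indicator measurable_one ?_).aemeasurable
      exact measurableSet_le measurable_snd measurable_fst
    calc ∫⁻ r in Ioc (0:ℝ) q, ρ (Iic r)
        = ∫⁻ r in Ioc (0:ℝ) q, ∫⁻ t,
            ({p : ℝ × ℝ | p.2 ≤ p.1}.indicator (fun _ => (1 : ℝ≥0∞)) (r, t)) ∂ρ := by
          refine lintegral_congr fun r => ?_
          have : ∀ t, ({p : ℝ × ℝ | p.2 ≤ p.1}.indicator (fun _ => (1 : ℝ≥0∞)) (r, t))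
              = (Iic r).indicator (fun _ => (1 : ℝ≥0∞)) t := by
            intro t; simp [Set.indicator_apply, mem_Iic]
          simp_rw [this]
          exact (lintegral_indicator_one measurableSet_Iic).symm
      _ = ∫⁻ t, ∫⁻ r in Ioc (0:ℝ) q,
            ({p : ℝ × ℝ | p.2 ≤ p.1}.indicator (fun _ => (1 : ℝ≥0∞)) (r, t)) ∂volume ∂ρ :=
          lintegral_lintegral_swap hmeas
      _ = ∫⁻ t, volume (Ici t ∩ Ioc 0 q) ∂ρ := by
          refine lintegral_congr fun t => ?_
          have : ∀ r, ({p : ℝ × ℝ | p.2 ≤ p.1}.indicator (fun _ => (1 : ℝ≥0∞)) (r, t))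
              = (Ici t).indicator (fun _ => (1 : ℝ≥0∞)) r := by
            intro r; simp [Set.indicator_apply, mem_Ici]
          simp_rw [this]
          rw [lintegral_indicator measurableSet_Ici, Measure.restrict_restrict measurableSet_Ici,
            lintegral_one, Measure.restrict_apply_univ]
  have hvol : ∀ t : ℝ, volume (Ici t ∩ Ioc 0 q) = ENNReal.ofReal (q - max 0 t) := by
    intro t
    rcases le_or_gt t 0 with ht | ht
    · have : Ici t ∩ Ioc 0 q = Ioc 0 q := by
        refine inter_eq_right.mpr fun x hx => ht.trans hx.1.le
      rw [this, Real.volume_Ioc, max_eq_left ht]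
    · have : Ici t ∩ Ioc 0 q = Icc t q := by
        ext x
        simp only [mem_inter_iff, mem_Ici, mem_Ioc, mem_Icc]
        exact ⟨fun h => ⟨h.1, h.2.2⟩, fun h => ⟨h.1, lt_of_lt_of_le ht h.1, h.2⟩⟩
      rw [this, Real.volume_Icc, max_eq_right ht.le]
  have hae : ∀ᵐ t ∂ρ, 0 ≤ t := by
    rw [ae_iff]
    simp only [not_le]; exact hsupp
  have hstep : ∫⁻ t, volume (Ici t ∩ Ioc 0 q) ∂ρ
      = ∫⁻ t in Iic q, ENNReal.ofReal (q - t) ∂ρ := by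
    simp_rw [hvol]
    rw [show (∫⁻ t in Iic q, ENNReal.ofReal (q - t) ∂ρ)
        = ∫⁻ t, (Iic q).indicator (fun t => ENNReal.ofReal (q - t)) t ∂ρ from
        (lintegral_indicator measurableSet_Iic _).symm]
    refine lintegral_congr_ae ?_
    filter_upwards [hae] with t ht
    rw [max_eq_right ht, Set.indicator_apply]
    split_ifs with h
    · rfl
    · rw [mem_Iic, not_le] at h
      rw [ENNReal.ofReal_eq_zero]
      linarith
  have hIqt : IntegrableOn (fun t : ℝ => q - t) (Iic q) ρ :=
    ((integrable_const q).sub hint).integrableOn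
  have hleft : ENNReal.ofReal (∫ r in Ioc (0:ℝ) q, cdf ρ r) = ∫⁻ r in Ioc (0:ℝ) q, ρ (Iic r) := by
    rw [ofReal_integral_eq_lintegral_ofReal hint_cdf
      (Filter.Eventually.of_forall fun r => ENNReal.toReal_nonneg)]
    refine lintegral_congr fun r => ?_
    rw [cdf, ENNReal.ofReal_toReal (measure_ne_top ρ _)]
  have hright : ENNReal.ofReal (∫ t in Iic q, (q - t) ∂ρ)
      = ∫⁻ t in Iic q, ENNReal.ofReal (q - t) ∂ρ := by
    refine ofReal_integral_eq_lintegral_ofReal hIqt ?_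
    filter_upwards [ae_restrict_mem measurableSet_Iic] with t ht
    simp only [Pi.zero_apply, sub_nonneg]
    exact ht
  have hmain : ∫ r in Ioc (0:ℝ) q, cdf ρ r = ∫ t in Iic q, (q - t) ∂ρ := by
    have h1 : (0:ℝ) ≤ ∫ r in Ioc (0:ℝ) q, cdf ρ r :=
      integral_nonneg fun r => ENNReal.toReal_nonneg
    have h2 : (0:ℝ) ≤ ∫ t in Iic q, (q - t) ∂ρ := by
      refine setIntegral_nonneg measurableSet_Iic fun t ht => ?_
      simp only [sub_nonneg]; exact ht
    have := hleft.trans (hswap.trans (hstep.trans hright.symm))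
    exact (ENNReal.ofReal_eq_ofReal_iff h1 h2).mp this
  rw [hmain, integral_sub (integrableOn_const (s := Iic q) (C := q) (measure_ne_top ρ _)) hint.integrableOn,
    setIntegral_const, smul_eq_mul, mul_comm, measureReal_def]

/-- For the hard-threshold weight `W = ζ⁻¹ 1_{[0,ζ]}` and a non-atomic probability measure `ρ`
on `[0,∞)` with finite first moment whose quantile `q = F_ρ⁻¹(ζ)` is the unique point with
`F_ρ(q) = ζ`, the influence function `ζ⁻¹ ∫_0^q (F_ρ(r) - 1_{[R,∞)}(r)) dr` of `Φ_W` at `ρ` in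
direction `R ≥ 0` equals `ζ⁻¹(R + (ζ-1)q) - Φ_W(ρ)` when `0 ≤ R ≤ q` and `q - Φ_W(ρ)` when
`R > q`; in both cases it is at most `q - Φ_W(ρ)`. -/
theorem influence_of_hard_threshold
    (ρ : Measure ℝ) [IsProbabilityMeasure ρ] [NullSingletonClass ρ]
    (hsupp : ρ (Iio 0) = 0) (hint : Integrable (fun r : ℝ => r) ρ)
    (ζ : ℝ) (hζ : ζ ∈ Ioo (0 : ℝ) 1)
    (q : ℝ) (hq : q = quant ρ ζ) (hqcdf : cdf ρ q = ζ)
    (huniq : ∀ r : ℝ, cdf ρ r = ζ → r = q)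
    (R : ℝ) (hR : 0 ≤ R) :
    (R ≤ q →
      ζ⁻¹ * ∫ r in (0 : ℝ)..q, (cdf ρ r - indicator (Ici R) (fun _ => (1 : ℝ)) r) =
        ζ⁻¹ * (R + (ζ - 1) * q) - PhiW (hardW ζ) ρ) ∧
    (q < R →
      ζ⁻¹ * ∫ r in (0 : ℝ)..q, (cdf ρ r - indicator (Ici R) (fun _ => (1 : ℝ)) r) =
        q - PhiW (hardW ζ) ρ) ∧
    ζ⁻¹ * ∫ r in (0 : ℝ)..q, (cdf ρ r - indicator (Ici R) (fun _ => (1 : ℝ)) r) ≤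
      q - PhiW (hardW ζ) ρ := by
  obtain ⟨hζ0, hζ1⟩ := hζ
  have hq0 : 0 ≤ q := by
    by_contra h
    push_neg at h
    have hz : ρ (Iic q) = 0 :=
      measure_mono_null (fun x (hx : x ≤ q) => lt_of_le_of_lt hx h) hsupp
    rw [cdf, hz] at hqcdf
    simp at hqcdf
    linarith
  have hmono : Monotone (cdf ρ) := fun a b hab =>
    ENNReal.toReal_mono (measure_ne_top ρ _) (measure_mono (Iic_subset_Iic.2 hab))
  have hcdf_meas : Measurable (cdf ρ) := hmono.measurable
  have hcdf_le_one : ∀ r, cdf ρ r ≤ 1 := fun r => by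
    have := ENNReal.toReal_mono (measure_ne_top ρ univ) (measure_mono (subset_univ (Iic r)))
    simpa [cdf, measure_univ] using this
  have hset : ∀ r : ℝ, cdf ρ r ≤ ζ ↔ r ≤ q := by
    intro r
    constructor
    · intro h
      by_contra hr
      push_neg at hr
      have h1 : ζ ≤ cdf ρ r := hqcdf ▸ hmono hr.le
      exact absurd (huniq r (le_antisymm h h1)) (ne_of_gt hr)
    · intro h
      exact hqcdf ▸ hmono h
  -- PhiW value
  have hPhi : PhiW (hardW ζ) ρ = ζ⁻¹ * ∫ t in Iic q, t ∂ρ := by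
    rw [PhiW]
    have hfn : (fun r => r * hardW ζ (cdf ρ r)) = (Iic q).indicator (fun r => ζ⁻¹ * r) := by
      funext r
      simp only [hardW, Set.indicator_apply, mem_Iic]
      by_cases h : r ≤ q
      · rw [if_pos h, if_pos ((hset r).2 h), mul_comm]
      · rw [if_neg h, if_neg (fun hh => h ((hset r).1 hh)), mul_zero]
    rw [hfn, integral_indicator measurableSet_Iic, integral_const_mul]
  -- interval integral of the cdf
  have hint_cdf : IntegrableOn (cdf ρ) (Ioc 0 q) volume := by
    refine Integrable.mono' (integrable_const 1) hcdf_meas.aestronglyMeasurable ?_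
    filter_upwards with r
    have h0 : (0:ℝ) ≤ cdf ρ r := ENNReal.toReal_nonneg
    rw [Real.norm_eq_abs, abs_of_nonneg h0]
    exact hcdf_le_one r
  have hint_ind : IntegrableOn (indicator (Ici R) (fun _ => (1:ℝ))) (Ioc 0 q) volume := by
    refine Integrable.mono' (integrable_const 1)
      ((measurable_const.indicator measurableSet_Ici).aestronglyMeasurable) ?_
    filter_upwards with r
    rw [Real.norm_eq_abs]
    rcases Set.indicator_eq_zero_or_self (Ici R) (fun _ => (1:ℝ)) r with h | h <;> rw [h] <;> norm_num
  have hii1 : IntervalIntegrable (cdf ρ) volume 0 q := by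
    rw [intervalIntegrable_iff, uIoc_of_le hq0]; exact hint_cdf
  have hii2 : IntervalIntegrable (indicator (Ici R) (fun _ => (1:ℝ))) volume 0 q := by
    rw [intervalIntegrable_iff, uIoc_of_le hq0]; exact hint_ind
  have hcdfint : ∫ r in (0:ℝ)..q, cdf ρ r = q * ζ - ∫ t in Iic q, t ∂ρ := by
    rw [intervalIntegral.integral_of_le hq0, key_fubini ρ hsupp hint q hq0]
    rw [show (ρ (Iic q)).toReal = ζ from hqcdf]
  have hindint : ∫ r in (0:ℝ)..q, indicator (Ici R) (fun _ => (1:ℝ)) r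
      = if R ≤ q then q - R else 0 := by
    rw [intervalIntegral.integral_of_le hq0, setIntegral_indicator measurableSet_Ici,
      setIntegral_const, smul_eq_mul, mul_one]
    split_ifs with h
    · rcases eq_or_lt_of_le hR with h0 | h0
      · have : Ioc (0:ℝ) q ∩ Ici R = Ioc 0 q := by
          refine inter_eq_left.mpr fun x hx => ?_
          rw [← h0]; exact hx.1.le
        rw [this, measureReal_def, Real.volume_Ioc, ENNReal.toReal_ofReal (by linarith)]
        rw [← h0]
      · have : Ioc (0:ℝ) q ∩ Ici R = Icc R q := by
          ext x
          simp only [mem_inter_iff, mem_Ioc, mem_Ici, mem_Icc]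
          exact ⟨fun hx => ⟨hx.2, hx.1.2⟩, fun hx => ⟨⟨lt_of_lt_of_le h0 hx.1, hx.2⟩, hx.1⟩⟩
        rw [this, measureReal_def, Real.volume_Icc, ENNReal.toReal_ofReal (by linarith)]
    · have : Ioc (0:ℝ) q ∩ Ici R = ∅ := by
        push_neg at h
        refine eq_empty_of_forall_notMem fun x hx => ?_
        exact absurd (hx.2.trans hx.1.2) (not_le.mpr h)
      rw [this]
      simp
  have hsplit : ∫ r in (0:ℝ)..q, (cdf ρ r - indicator (Ici R) (fun _ => (1:ℝ)) r)
      = (∫ r in (0:ℝ)..q, cdf ρ r) - ∫ r in (0:ℝ)..q, indicator (Ici R) (fun _ => (1:ℝ)) r :=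
    intervalIntegral.integral_sub hii1 hii2
  have hζne : ζ ≠ 0 := ne_of_gt hζ0
  constructor
  · intro hRq
    rw [hsplit, hcdfint, hindint, if_pos hRq, hPhi]
    field_simp
    ring
  constructor
  · intro hqR
    rw [hsplit, hcdfint, hindint, if_neg (not_le.mpr hqR), hPhi]
    field_simp
    ring
  · rcases le_or_gt R q with hRq | hqR
    · rw [hsplit, hcdfint, hindint, if_pos hRq, hPhi]
      have h1 : ζ * ζ⁻¹ = 1 := mul_inv_cancel₀ hζne
      have h2 : ζ⁻¹ * R ≤ ζ⁻¹ * q := mul_le_mul_of_nonneg_left hRq (inv_nonneg.mpr hζ0.le)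
      nlinarith [inv_nonneg.mpr hζ0.le]
    · rw [hsplit, hcdfint, hindint, if_neg (not_le.mpr hqR), hPhi]
      have h1 : ζ * ζ⁻¹ = 1 := mul_inv_cancel₀ hζne
      nlinarith
end

section
/- Let μ*, ν be Borel probability measures on ℝ^d, λ ∈ (0,1), and μ = (1−λ)μ* + λν. Let 𝒮 be a class of nonempty compact subsets of ℝ^d such that all pushforwards μ_S and μ*_S for S ∈ 𝒮 are non-atomic with finite first moments. Suppose there exist S₀ ∈ 𝒮, δ > 0, β ∈ (0, 1−λ) and r* > 0 such that every S ∈ 𝒮 with Φ(μ*_S) > Φ(μ*_{S₀}) + δ satisfies F_{μ_S}(r) < β F_{μ*_{S₀}}(r) for all r ≤ r* (Assumption A). Let W : [0,1] → [0,∞) be nonincreasing with W(t) = 0 for all t ≥ ζ := F_{μ_{S₀}}(r*). Then every S ∈ 𝒮 satisfying Φ_W(μ_S) − Φ_W(μ_{S₀}) < (1 − β/(1−λ)) · IF_max(μ_{S₀}, W) satisfies Φ(μ*_S) ≤ Φ(μ*_{S₀}) + δ. In particular, if IF_max(μ_{S₀}, W) > 0, then any minimizer S† of S ↦ Φ_W(μ_S)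 over 𝒮 satisfies Φ(μ*_{S†}) ≤ Φ(μ*_{S₀}) + δ. -/
open MeasureTheory Set

/-- The mean functional `Φ(ρ) = ∫ r dρ(r)`. -/
noncomputable def Phi (ρ : Measure ℝ) : ℝ := ∫ r, r ∂ρ

/-- `IF_max(ρ,W) = ∫_0^{F_ρ⁻¹(ζ)} W(F_ρ(r)) F_ρ(r) dr` for `W` vanishing on `[ζ,1]`. -/
noncomputable def IFmax (W : ℝ → ℝ) (ρ : Measure ℝ) (ζ : ℝ) : ℝ :=
  ∫ r in (0 : ℝ)..(quant ρ ζ), W (cdf ρ r) * cdf ρ r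

/-- The distortion function `d_S(x) = min_{y ∈ S} ‖x - y‖²`. -/
noncomputable def distS {d : ℕ} (S : Set (EuclideanSpace ℝ (Fin d)))
    (x : EuclideanSpace ℝ (Fin d)) : ℝ := (Metric.infDist x S) ^ 2

/-- The pushforward `μ_S` of `μ` under `d_S`. -/
noncomputable def pushS {d : ℕ} (μ : Measure (EuclideanSpace ℝ (Fin d)))
    (S : Set (EuclideanSpace ℝ (Fin d))) : Measure ℝ := Measure.map (distS S) μ

namespace RAux

open Filter Topology

variable {ρ : Measure ℝ}

lemma cdf_mono [IsFiniteMeasure ρ] : Monotone (cdf ρ) := fun _ _ hab =>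
  ENNReal.toReal_mono (measure_ne_top _ _) (measure_mono (Iic_subset_Iic.mpr hab))

lemma cdf_nonneg (r : ℝ) : 0 ≤ cdf ρ r := ENNReal.toReal_nonneg

lemma cdf_le_one [IsProbabilityMeasure ρ] (r : ℝ) : cdf ρ r ≤ 1 := by
  have := ENNReal.toReal_mono (measure_ne_top ρ univ) (measure_mono (subset_univ (Iic r)))
  simpa [cdf] using this

lemma ofReal_cdf [IsFiniteMeasure ρ] (r : ℝ) : ENNReal.ofReal (cdf ρ r) = ρ (Iic r) :=
  ENNReal.ofReal_toReal (measure_ne_top _ _)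

lemma cdf_measurable [IsFiniteMeasure ρ] : Measurable (cdf ρ) := cdf_mono.measurable

lemma cdf_eq_pcdf [IsProbabilityMeasure ρ] : cdf ρ = ⇑(ProbabilityTheory.cdf ρ) :=
  funext fun x => (ProbabilityTheory.cdf_eq_real (μ := ρ) x).symm

lemma cdf_continuous [IsProbabilityMeasure ρ] (hatom : ∀ r : ℝ, ρ {r} = 0) :
    Continuous (cdf ρ) := by
  rw [cdf_eq_pcdf]
  rw [continuous_iff_continuousAt]
  intro x
  rw [(ProbabilityTheory.cdf ρ).mono.continuousAt_iff_leftLim_eq_rightLim]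
  have h1 : (ProbabilityTheory.cdf ρ).measure {x} = 0 := by
    rw [ProbabilityTheory.measure_cdf]; exact hatom x
  rw [StieltjesFunction.measure_singleton] at h1
  have h2 : Function.leftLim (ProbabilityTheory.cdf ρ) x ≤ ProbabilityTheory.cdf ρ x :=
    (ProbabilityTheory.cdf ρ).mono.leftLim_le le_rfl
  have h3 : ProbabilityTheory.cdf ρ x ≤ Function.leftLim (ProbabilityTheory.cdf ρ) x := by
    by_contra h
    push_neg at h
    have := ENNReal.ofReal_pos.mpr (sub_pos.mpr h)
    rw [h1] at this
    exact lt_irrefl _ this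
  rw [(ProbabilityTheory.cdf ρ).rightLim_eq, le_antisymm h2 h3]

lemma cdf_tendsto_one [IsProbabilityMeasure ρ] : Tendsto (cdf ρ) atTop (𝓝 1) := by
  have h := tendsto_measure_Iic_atTop (μ := ρ)
  have h2 : Tendsto (fun r => (ρ (Iic r)).toReal) atTop (𝓝 (ρ univ).toReal) :=
    (ENNReal.tendsto_toReal (measure_ne_top ρ univ)).comp h
  simpa [measure_univ] using (show Tendsto (cdf ρ) atTop (𝓝 (ρ univ).toReal) from h2)

/-- Probability integral transform: the pushforward of an atomless probability measure under
its own cdf is the uniform distribution on `(0,1]`. -/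
lemma map_cdf [IsProbabilityMeasure ρ] (hatom : ∀ r : ℝ, ρ {r} = 0) :
    Measure.map (cdf ρ) ρ = (volume : Measure ℝ).restrict (Ioc 0 1) := by
  have hc : Continuous (cdf ρ) := cdf_continuous hatom
  refine Measure.ext_of_Iic _ _ (fun u => ?_)
  rw [Measure.map_apply cdf_measurable measurableSet_Iic,
    Measure.restrict_apply measurableSet_Iic]
  rcases lt_or_ge u 0 with hu | hu
  · have h1 : cdf ρ ⁻¹' Iic u = ∅ := by
      ext r; simp only [mem_preimage, mem_Iic, mem_empty_iff_false, iff_false, not_le]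
      exact lt_of_lt_of_le hu (cdf_nonneg r)
    have h2 : Iic u ∩ Ioc 0 1 = ∅ := by
      ext t; simp only [mem_inter_iff, mem_Iic, mem_Ioc, mem_empty_iff_false, iff_false]
      rintro ⟨h, h0, _⟩; linarith
    rw [h1, h2]
    simp
  rcases le_or_gt 1 u with hu1 | hu1
  · have h1 : cdf ρ ⁻¹' Iic u = univ := by
      ext r; simp only [mem_preimage, mem_Iic, mem_univ, iff_true]
      exact le_trans (cdf_le_one r) hu1
    have h2 : Iic u ∩ Ioc 0 1 = Ioc 0 1 := by
      rw [inter_eq_right]; intro t ht; exact le_trans ht.2 hu1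
    rw [h1, h2, measure_univ, Real.volume_Ioc]
    norm_num
  · have h2 : Iic u ∩ Ioc 0 1 = Ioc 0 u := by
      ext t; simp only [mem_inter_iff, mem_Iic, mem_Ioc]
      constructor
      · rintro ⟨h, h0, _⟩; exact ⟨h0, h⟩
      · rintro ⟨h0, h⟩; exact ⟨h, h0, le_trans h hu1.le⟩
    rw [h2, Real.volume_Ioc, sub_zero]
    set A := cdf ρ ⁻¹' Iic u with hA
    by_cases hne : A.Nonempty
    · have hlower : ∀ x y, y ≤ x → x ∈ A → y ∈ A := fun x y hxy hx =>
        le_trans (cdf_mono hxy) hx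
      have hbdd : BddAbove A := by
        by_contra hb
        have hall : ∀ x : ℝ, x ∈ A := by
          intro x
          rcases not_bddAbove_iff.mp hb x with ⟨y, hy, hxy⟩
          exact hlower y x hxy.le hy
        have := cdf_tendsto_one (ρ := ρ)
        have hev : ∀ᶠ r in atTop, cdf ρ r > u := this.eventually (eventually_gt_nhds hu1)
        rcases hev.exists with ⟨r, hr⟩
        exact absurd (hall r) (by simpa [hA] using hr.not_ge)
      set a := sSup A with ha
      have haA : cdf ρ a ≤ u := by
        have hle : ∀ x ∈ A, cdf ρ x ≤ u := fun x hx => hx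
        rcases hne with ⟨x0, hx0⟩
        have key : ∀ x < a, cdf ρ x ≤ u := by
          intro x hx
          rcases exists_lt_of_lt_csSup ⟨x0, hx0⟩ hx with ⟨y, hy, hxy⟩
          exact le_trans (cdf_mono hxy.le) (hle y hy)
        have : Tendsto (cdf ρ) (nhdsWithin a (Iio a)) (𝓝 (cdf ρ a)) :=
          (hc.tendsto a).mono_left nhdsWithin_le_nhds
        exact le_of_tendsto this (eventually_nhdsWithin_of_forall (fun x hx => key x hx))
      have hau : u ≤ cdf ρ a := by
        have key : ∀ x > a, u < cdf ρ x := by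
          intro x hx
          by_contra h
          push_neg at h
          exact absurd (le_csSup hbdd (show x ∈ A from h)) hx.not_ge
        have : Tendsto (cdf ρ) (nhdsWithin a (Ioi a)) (𝓝 (cdf ρ a)) :=
          (hc.tendsto a).mono_left nhdsWithin_le_nhds
        exact ge_of_tendsto this (eventually_nhdsWithin_of_forall (fun x hx => (key x hx).le))
      have hFa : cdf ρ a = u := le_antisymm haA hau
      have hAIic : A = Iic a := by
        ext x
        constructor
        · exact fun hx => le_csSup hbdd hx
        · intro hx
          exact (le_trans (cdf_mono hx) haA : cdf ρ x ≤ u)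
      rw [hAIic, ← ofReal_cdf, hFa]
    · rw [not_nonempty_iff_eq_empty.mp hne]
      have hu0 : u = 0 := by
        by_contra h
        have hupos : 0 < u := lt_of_le_of_ne hu (Ne.symm h)
        have hlim : Tendsto (ρ ∘ fun n : ℕ => Iic (-(n:ℝ))) atTop
            (𝓝 (ρ (⋂ n : ℕ, Iic (-(n:ℝ))))) :=
          tendsto_measure_iInter_atTop
            (fun n => (measurableSet_Iic).nullMeasurableSet)
            (fun m n hmn => Iic_subset_Iic.mpr (by simp only [neg_le_neg_iff, Nat.cast_le]; exact hmn))
            ⟨0, measure_ne_top _ _⟩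
        have hempty : (⋂ n : ℕ, Iic (-(n:ℝ))) = ∅ := by
          ext x
          simp only [mem_iInter, mem_Iic, mem_empty_iff_false, iff_false, not_forall, not_le]
          rcases exists_nat_gt (-x) with ⟨n, hn⟩
          exact ⟨n, by linarith⟩
        rw [hempty, measure_empty] at hlim
        have hge : ∀ n : ℕ, ENNReal.ofReal u ≤ (ρ ∘ fun n : ℕ => Iic (-(n:ℝ))) n := by
          intro n
          have : (-(n:ℝ)) ∉ A := by rw [not_nonempty_iff_eq_empty.mp hne]; exact notMem_empty _
          have hlt : u < cdf ρ (-(n:ℝ)) := by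
            simpa [hA, mem_preimage, mem_Iic, not_le] using this
          calc ENNReal.ofReal u ≤ ENNReal.ofReal (cdf ρ (-(n:ℝ))) := ENNReal.ofReal_le_ofReal hlt.le
            _ = ρ (Iic (-(n:ℝ))) := ofReal_cdf _
        have := le_of_tendsto_of_tendsto' tendsto_const_nhds hlim hge
        simp only [nonpos_iff_eq_zero, ENNReal.ofReal_eq_zero] at this
        linarith
      simp [hu0]

/-- The flat part of the cdf beyond `s` is a null set. -/
lemma flat_null [IsProbabilityMeasure ρ] (hatom : ∀ r : ℝ, ρ {r} = 0) (s : ℝ) :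
    ρ {r | s < r ∧ cdf ρ r ≤ cdf ρ s} = 0 := by
  have hc : Continuous (cdf ρ) := cdf_continuous hatom
  set B := {r | s < r ∧ cdf ρ r ≤ cdf ρ s} with hB
  by_cases hne : B.Nonempty
  · by_cases hbdd : BddAbove B
    · set b := sSup B with hb
      have hBsub : B ⊆ Ioc s b := fun r hr => ⟨hr.1, le_csSup hbdd hr⟩
      have hFb : cdf ρ b ≤ cdf ρ s := by
        have key : ∀ x < b, cdf ρ x ≤ cdf ρ s := by
          intro x hx
          rcases exists_lt_of_lt_csSup hne hx with ⟨y, hy, hxy⟩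
          exact le_trans (cdf_mono hxy.le) hy.2
        have : Tendsto (cdf ρ) (nhdsWithin b (Iio b)) (𝓝 (cdf ρ b)) :=
          (hc.tendsto b).mono_left nhdsWithin_le_nhds
        exact le_of_tendsto this (eventually_nhdsWithin_of_forall key)
      have hsb : s ≤ b := by rcases hne with ⟨x, hx⟩; exact le_trans hx.1.le (le_csSup hbdd hx)
      have hIoc : ρ (Ioc s b) = 0 := by
        have h1 : ρ (Ioc s b) = ρ (Iic b) - ρ (Iic s) := by
          rw [← Iic_sdiff_Iic]
          exact measure_diff (Iic_subset_Iic.mpr hsb) measurableSet_Iic.nullMeasurableSet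
            (measure_ne_top _ _)
        rw [h1, ← ofReal_cdf, ← ofReal_cdf]
        have : cdf ρ b = cdf ρ s := le_antisymm hFb (cdf_mono hsb)
        rw [this]
        simp
      exact measure_mono_null hBsub hIoc
    · have hconst : ∀ x, s ≤ x → cdf ρ x ≤ cdf ρ s := by
        intro x hx
        rcases not_bddAbove_iff.mp hbdd x with ⟨y, hy, hxy⟩
        exact le_trans (cdf_mono hxy.le) hy.2
      have h1 : cdf ρ s = 1 := by
        have := cdf_tendsto_one (ρ := ρ)
        have hle : ∀ᶠ x in atTop, cdf ρ x ≤ cdf ρ s :=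
          eventually_atTop.mpr ⟨s, hconst⟩
        have := le_of_tendsto this hle
        exact le_antisymm (cdf_le_one s) this
      have h2 : ρ (Ioi s) = 0 := by
        have hIic : ρ (Iic s) = 1 := by rw [← ofReal_cdf, h1]; simp
        have htot := measure_add_measure_compl (μ := ρ) (measurableSet_Iic (a := s))
        rw [hIic, measure_univ, compl_Iic] at htot
        have h3 : (1:ENNReal) + ρ (Ioi s) = 1 + 0 := by rw [add_zero]; exact htot
        exact (ENNReal.add_right_inj (by simp)).mp h3
      exact measure_mono_null (fun r hr => hr.1) h2
  · rw [not_nonempty_iff_eq_empty.mp hne]; simp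

variable (W : ℝ → ℝ)

/-- The weight function, clamped to the unit interval. -/
noncomputable def Wc (t : ℝ) : ℝ := W (max 0 (min 1 t))

lemma clamp_mem (t : ℝ) : max 0 (min 1 t) ∈ Icc (0:ℝ) 1 :=
  ⟨le_max_left _ _, max_le zero_le_one (min_le_left _ _)⟩

lemma Wc_eq {t : ℝ} (ht : t ∈ Icc (0:ℝ) 1) : Wc W t = W t := by
  rw [Wc, min_eq_right ht.2, max_eq_right ht.1]

lemma Wc_anti (hW : AntitoneOn W (Icc 0 1)) : Antitone (Wc W) := by
  intro a b hab
  exact hW (clamp_mem a) (clamp_mem b) (max_le_max le_rfl (min_le_min le_rfl hab))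

lemma Wc_nonneg (hW : ∀ t ∈ Icc (0:ℝ) 1, 0 ≤ W t) (t : ℝ) : 0 ≤ Wc W t := hW _ (clamp_mem t)

/-- `Ψ(u) = ∫_{(u,1]} Wc` -/
noncomputable def Psi (u : ℝ) : ℝ := ∫ t in Ioc u 1, Wc W t

variable (hWa : AntitoneOn W (Icc 0 1)) (hWn : ∀ t ∈ Icc (0:ℝ) 1, 0 ≤ W t)

include hWa in
lemma Wc_integrableOn (a b : ℝ) : IntegrableOn (Wc W) (Ioc a b) := by
  have h : IntegrableOn (Wc W) (Icc a b) :=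
    AntitoneOn.integrableOn_isCompact isCompact_Icc ((Wc_anti W hWa).antitoneOn _)
  exact h.mono_set Ioc_subset_Icc_self

omit hWa in
include hWn in
lemma Psi_nonneg (u : ℝ) : 0 ≤ Psi W u :=
  setIntegral_nonneg measurableSet_Ioc (fun t _ => Wc_nonneg W hWn t)

include hWa hWn in
lemma Psi_anti : Antitone (Psi W) := by
  intro a b hab
  exact setIntegral_mono_set (Wc_integrableOn W hWa a 1)
    (Filter.Eventually.of_forall fun t => Wc_nonneg W hWn t)
    (HasSubset.Subset.eventuallyLE (Ioc_subset_Ioc_left hab))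

omit hWa in
include hWn in
/-- vanishing of `Ψ` above `ζ` -/
lemma Psi_zero {ζ : ℝ} (hζ1 : ζ ≤ 1) (hz : ∀ t, ζ ≤ t → W t = 0)
    {u : ℝ} (hu : ζ ≤ u) : Psi W u = 0 := by
  rw [Psi]
  have : ∀ t ∈ Ioc u 1, Wc W t = 0 := by
    intro t ht
    have h1 : ζ ≤ max 0 (min 1 t) := le_max_of_le_right (le_min hζ1 (le_trans hu ht.1.le))
    exact hz _ h1
  rw [setIntegral_congr_fun measurableSet_Ioc this]
  simp

include hWa hWn in
/-- the key gap estimate -/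
lemma Psi_gap {v c : ℝ} (hv0 : 0 ≤ v) (hv1 : v ≤ 1) (hc0 : 0 ≤ c) (hc1 : c ≤ 1) :
    (1 - c) * (v * Wc W v) ≤ Psi W (c * v) - Psi W v := by
  have hcv : c * v ≤ v := by nlinarith
  have hsplit : Psi W (c * v) = (∫ t in Ioc (c*v) v, Wc W t) + Psi W v := by
    rw [Psi, Psi, ← setIntegral_union (Ioc_disjoint_Ioc_of_le le_rfl) measurableSet_Ioc
      (Wc_integrableOn W hWa _ _) (Wc_integrableOn W hWa _ _),
      Ioc_union_Ioc_eq_Ioc hcv hv1]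
  rw [hsplit]
  ring_nf
  have hmono : ∫ t in Ioc (c*v) v, Wc W v ≤ ∫ t in Ioc (c*v) v, Wc W t := by
    apply setIntegral_mono_on (integrableOn_const (by simp))
      (Wc_integrableOn W hWa _ _) measurableSet_Ioc
    intro t ht
    exact Wc_anti W hWa ht.2
  have hconst : ∫ t in Ioc (c*v) v, Wc W v = (v - c*v) * Wc W v := by
    rw [setIntegral_const, Real.volume_real_Ioc_of_le hcv, smul_eq_mul]
  nlinarith [hmono, hconst]

include hWa in
lemma tail_eq [IsProbabilityMeasure ρ] (hatom : ∀ r : ℝ, ρ {r} = 0) (s : ℝ) :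
    ∫ r in Ioi s, Wc W (cdf ρ r) ∂ρ = Psi W (cdf ρ s) := by
  have hWm : Measurable (Wc W) := (Wc_anti W hWa).measurable
  have hAae : Ioi s =ᵐ[ρ] (cdf ρ ⁻¹' Ioi (cdf ρ s)) := by
    rw [ae_eq_set]
    constructor
    · refine measure_mono_null ?_ (flat_null hatom s)
      intro r hr
      simp only [mem_diff, mem_Ioi, mem_preimage, not_lt] at hr
      exact ⟨hr.1, hr.2⟩
    · have : (cdf ρ ⁻¹' Ioi (cdf ρ s)) \ Ioi s = ∅ := by
        ext r
        simp only [mem_diff, mem_preimage, mem_Ioi, not_lt, mem_empty_iff_false, iff_false,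
          not_and, not_le]
        intro h
        exact lt_of_not_ge fun hrs => absurd (cdf_mono hrs) (not_le.mpr h)
      rw [this]; simp
  rw [setIntegral_congr_set hAae]
  rw [← setIntegral_map measurableSet_Ioi ?hf cdf_measurable.aemeasurable]
  case hf => exact hWm.aestronglyMeasurable
  rw [map_cdf hatom, Measure.restrict_restrict measurableSet_Ioi]
  have hset : Ioi (cdf ρ s) ∩ Ioc 0 1 = Ioc (cdf ρ s) 1 := by
    ext t
    simp only [mem_inter_iff, mem_Ioi, mem_Ioc]
    constructor
    · rintro ⟨h1, _, h3⟩; exact ⟨h1, h3⟩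
    · rintro ⟨h1, h2⟩; exact ⟨h1, lt_of_le_of_lt (cdf_nonneg s) h1, h2⟩
  rw [hset, Psi]

include hWa hWn in
/-- Layer cake representation of `Φ_W`. -/
lemma phiW_layer [IsProbabilityMeasure ρ] (hatom : ∀ r : ℝ, ρ {r} = 0)
    (hsupp : ρ (Iio 0) = 0) (hint : Integrable (fun r : ℝ => r) ρ) :
    Integrable (fun s => Psi W (cdf ρ s)) ((volume : Measure ℝ).restrict (Ioi 0)) ∧
    ∫ r, r * Wc W (cdf ρ r) ∂ρ = ∫ s in Ioi 0, Psi W (cdf ρ s) := by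
  have hWm : Measurable (Wc W) := (Wc_anti W hWa).measurable
  set g : ℝ → NNReal := fun r => Real.toNNReal (Wc W (cdf ρ r)) with hg
  have hgm : Measurable g := (hWm.comp cdf_measurable).real_toNNReal
  set ρ' : Measure ℝ := ρ.withDensity (fun r => (g r : ENNReal)) with hρ'
  have htrans : ∫ r, (fun x => x) r ∂ρ' = ∫ r, r * Wc W (cdf ρ r) ∂ρ := by
    rw [integral_withDensity_eq_integral_smul hgm]
    congr 1
    funext r
    simp only [NNReal.smul_def, smul_eq_mul, hg]
    rw [Real.coe_toNNReal _ (Wc_nonneg W hWn _), mul_comm]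
  have hint' : Integrable (fun r : ℝ => r) ρ' := by
    rw [hρ', integrable_withDensity_iff_integrable_smul hgm]
    have hb : Integrable (fun r : ℝ => Wc W 0 * |r|) ρ := (hint.abs.const_mul _)
    refine hb.mono' ?_ ?_
    · have hm : Measurable (fun r : ℝ => (g r : ℝ) * r) :=
        (measurable_coe_nnreal_real.comp hgm).mul measurable_id
      exact (hm.aestronglyMeasurable).congr
        (Filter.Eventually.of_forall fun r => by simp [NNReal.smul_def, smul_eq_mul])
    · refine Filter.Eventually.of_forall fun r => ?_
      have h0 : (g r : ℝ) = Wc W (cdf ρ r) := Real.coe_toNNReal _ (Wc_nonneg W hWn _)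
      have hnorm : ‖g r • r‖ = Wc W (cdf ρ r) * |r| := by
        simp [NNReal.smul_def, smul_eq_mul, h0, Real.norm_eq_abs, abs_mul,
          abs_of_nonneg (Wc_nonneg W hWn (cdf ρ r))]
      rw [hnorm]
      exact mul_le_mul_of_nonneg_right ((Wc_anti W hWa) (cdf_nonneg r)) (abs_nonneg r)
  have hsupp' : ρ' (Iio 0) = 0 := by
    rw [hρ', withDensity_apply _ measurableSet_Iio, Measure.restrict_eq_zero.mpr hsupp,
      lintegral_zero_measure]
  have f_nn : 0 ≤ᵐ[ρ'] (fun r : ℝ => r) := by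
    rw [Filter.EventuallyLE, ae_iff]
    refine measure_mono_null ?_ hsupp'
    intro r hr
    simp only [mem_setOf_eq, Pi.zero_apply, not_le] at hr
    exact hr
  have hpt : ∀ t : ℝ, (ρ' (Ioi t)).toReal = Psi W (cdf ρ t) := by
    intro t
    rw [← tail_eq W hWa hatom t]
    rw [hρ', withDensity_apply _ measurableSet_Ioi]
    rw [integral_eq_lintegral_of_nonneg_ae
      (Filter.Eventually.of_forall fun r => Wc_nonneg W hWn _)
      ((hWm.comp cdf_measurable).aestronglyMeasurable)]
    congr 1
  constructor
  · have hmeas : Measurable (fun t : ℝ => ρ' (Ioi t)) :=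
      Antitone.measurable (fun a b hab => measure_mono (Ioi_subset_Ioi hab))
    have hfin : ∫⁻ t in Ioi 0, ρ' (Ioi t) ≠ ⊤ := by
      have hlc := lintegral_eq_lintegral_meas_lt ρ' f_nn measurable_id.aemeasurable
      have : ∫⁻ t in Ioi 0, ρ' {a : ℝ | t < a} = ∫⁻ t in Ioi 0, ρ' (Ioi t) := rfl
      rw [this] at hlc
      rw [← hlc]
      exact hint'.lintegral_lt_top.ne
    have := integrable_toReal_of_lintegral_ne_top hmeas.aemeasurable.restrict hfin
    exact this.congr (Filter.Eventually.of_forall fun t => hpt t)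
  · have hlc := hint'.integral_eq_integral_meas_lt f_nn
    rw [← htrans, hlc]
    exact integral_congr_ae (Filter.Eventually.of_forall fun t => hpt t)

end RAux

/-- Theorem 1: under Assumption A, any model `S` whose robust objective value is within
`(1 - β/(1-λ)) IF_max(μ_{S₀}, W)` of that of `S₀` has reconstruction error on the unperturbed
distribution at most `Φ(μ*_{S₀}) + δ`; in particular (if `IF_max(μ_{S₀},W) > 0`) this holds
for any minimizer `S†` of `S ↦ Φ_W(μ_S)` over `𝒮`. -/
theorem robust_resilience_to_perturbations {d : ℕ}
    (μStar ν : Measure (EuclideanSpace ℝ (Fin d)))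
    [IsProbabilityMeasure μStar] [IsProbabilityMeasure ν]
    (lam : ℝ) (hlam : lam ∈ Ioo (0 : ℝ) 1)
    (μ : Measure (EuclideanSpace ℝ (Fin d)))
    (hμ : μ = ENNReal.ofReal (1 - lam) • μStar + ENNReal.ofReal lam • ν)
    (𝒮 : Set (Set (EuclideanSpace ℝ (Fin d))))
    (hScomp : ∀ S ∈ 𝒮, IsCompact S ∧ S.Nonempty)
    (hna : ∀ S ∈ 𝒮, (∀ r : ℝ, pushS μ S {r} = 0) ∧ (∀ r : ℝ, pushS μStar S {r} = 0))
    (hint : ∀ S ∈ 𝒮, Integrable (fun r : ℝ => r) (pushS μ S) ∧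
      Integrable (fun r : ℝ => r) (pushS μStar S))
    -- Assumption A
    (S₀ : Set (EuclideanSpace ℝ (Fin d))) (hS₀ : S₀ ∈ 𝒮)
    (δ : ℝ) (hδ : 0 < δ) (β : ℝ) (hβ : β ∈ Ioo (0 : ℝ) (1 - lam))
    (rstar : ℝ) (hrstar : 0 < rstar)
    (hA : ∀ S ∈ 𝒮, Phi (pushS μStar S) > Phi (pushS μStar S₀) + δ →
      ∀ r ≤ rstar, cdf (pushS μ S) r < β * cdf (pushS μStar S₀) r)
    -- the weight function
    (W : ℝ → ℝ) (hWanti : AntitoneOn W (Icc 0 1)) (hWnn : ∀ t ∈ Icc (0 : ℝ) 1, 0 ≤ W t)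
    (hWzero : ∀ t, cdf (pushS μ S₀) rstar ≤ t → W t = 0) :
    (∀ S ∈ 𝒮,
      PhiW W (pushS μ S) - PhiW W (pushS μ S₀) <
          (1 - β / (1 - lam)) * IFmax W (pushS μ S₀) (cdf (pushS μ S₀) rstar) →
        Phi (pushS μStar S) ≤ Phi (pushS μStar S₀) + δ) ∧
    (0 < IFmax W (pushS μ S₀) (cdf (pushS μ S₀) rstar) →
      ∀ Sdag ∈ 𝒮, (∀ S ∈ 𝒮, PhiW W (pushS μ Sdag) ≤ PhiW W (pushS μ S)) →
        Phi (pushS μStar Sdag) ≤ Phi (pushS μStar S₀) + δ) := by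
  classical
  obtain ⟨hlam0, hlam1⟩ := hlam
  obtain ⟨hβ0, hbl⟩ := hβ
  have h1lam : 0 < 1 - lam := by linarith
  set c : ℝ := β / (1 - lam) with hc
  have hc0 : 0 < c := div_pos hβ0 h1lam
  have hc1 : c < 1 := (div_lt_one h1lam).mpr hbl
  -- measurability of the distortion maps
  have hdm : ∀ T : Set (EuclideanSpace ℝ (Fin d)), Measurable (distS T) := fun T =>
    ((Metric.continuous_infDist_pt T).pow 2).measurable
  haveI hμprob : IsProbabilityMeasure μ := by
    constructor
    rw [hμ]
    simp only [Measure.add_apply, Measure.smul_apply, smul_eq_mul, measure_univ, mul_one]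
    rw [← ENNReal.ofReal_add (by linarith) hlam0.le]
    norm_num
  have hPμ : ∀ T, IsProbabilityMeasure (pushS μ T) := fun T =>
    Measure.isProbabilityMeasure_map (hdm T).aemeasurable
  have hPμs : ∀ T, IsProbabilityMeasure (pushS μStar T) := fun T =>
    Measure.isProbabilityMeasure_map (hdm T).aemeasurable
  have hPν : ∀ T, IsProbabilityMeasure (pushS ν T) := fun T =>
    Measure.isProbabilityMeasure_map (hdm T).aemeasurable
  have hsupp : ∀ T, pushS μ T (Iio 0) = 0 := by
    intro T
    rw [pushS, Measure.map_apply (hdm T) measurableSet_Iio]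
    have h0 : distS T ⁻¹' (Iio 0) = ∅ := by
      ext x
      simp only [mem_preimage, mem_Iio, mem_empty_iff_false, iff_false, not_lt, distS]
      positivity
    rw [h0]; simp
  -- convex splitting of the cdf
  have hcdfsplit : ∀ T r, (1 - lam) * cdf (pushS μStar T) r ≤ cdf (pushS μ T) r := by
    intro T r
    haveI := hPμs T; haveI := hPν T
    have hmap : pushS μ T
        = ENNReal.ofReal (1-lam) • pushS μStar T + ENNReal.ofReal lam • pushS ν T := by
      rw [pushS, hμ, Measure.map_add _ _ (hdm T), Measure.map_smul, Measure.map_smul]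
      rfl
    have h2 : (0:ℝ) ≤ lam * ((pushS ν T) (Iic r)).toReal := by positivity
    simp only [cdf]
    rw [hmap]
    simp only [Measure.add_apply, Measure.smul_apply, smul_eq_mul]
    rw [ENNReal.toReal_add (by finiteness) (by finiteness), ENNReal.toReal_mul,
      ENNReal.toReal_mul, ENNReal.toReal_ofReal (by linarith), ENNReal.toReal_ofReal hlam0.le]
    linarith
  set ρ0 : Measure ℝ := pushS μ S₀ with hρ0
  haveI := hPμ S₀
  set ζ : ℝ := cdf ρ0 rstar with hζ
  have hζ1 : ζ ≤ 1 := RAux.cdf_le_one rstar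
  have hWmz : ∀ t, ζ ≤ t → RAux.Wc W t = 0 := by
    intro t ht
    have h1 : ζ ≤ max 0 (min 1 t) := le_max_of_le_right (le_min hζ1 ht)
    exact hWzero _ h1
  -- quantile facts
  set q : ℝ := quant ρ0 ζ with hq
  have hqset : rstar ∈ {r : ℝ | 0 ≤ r ∧ ζ ≤ cdf ρ0 r} := ⟨hrstar.le, le_rfl⟩
  have hq0 : 0 ≤ q := le_csInf ⟨rstar, hqset⟩ (fun x hx => hx.1)
  have hqr : q ≤ rstar := csInf_le ⟨0, fun x hx => hx.1⟩ hqset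
  -- the main quantitative estimate
  have main : ∀ S ∈ 𝒮, Phi (pushS μStar S) > Phi (pushS μStar S₀) + δ →
      (1 - c) * IFmax W ρ0 ζ ≤ PhiW W (pushS μ S) - PhiW W ρ0 := by
    intro S hS hbad
    have hAS := hA S hS hbad
    set ρS : Measure ℝ := pushS μ S with hρS
    haveI := hPμ S
    -- key cdf comparison
    have hkey : ∀ s ∈ Ioc (0:ℝ) rstar, cdf ρS s ≤ c * cdf ρ0 s := by
      intro s hs
      have h1 := (hAS s hs.2).le
      have h2 := hcdfsplit S₀ s
      rw [hc]
      rw [div_mul_eq_mul_div, le_div_iff₀ h1lam]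
      calc cdf ρS s * (1 - lam) ≤ (β * cdf (pushS μStar S₀) s) * (1 - lam) := by nlinarith
        _ = β * ((1 - lam) * cdf (pushS μStar S₀) s) := by ring
        _ ≤ β * cdf ρ0 s := by nlinarith
    -- layer cake representations
    obtain ⟨hintS, heqS⟩ := RAux.phiW_layer (ρ := ρS) W hWanti hWnn (hna S hS).1
      (hsupp S) (hint S hS).1
    obtain ⟨hint0, heq0⟩ := RAux.phiW_layer (ρ := ρ0) W hWanti hWnn (hna S₀ hS₀).1
      (hsupp S₀) (hint S₀ hS₀).1
    have hPhiS : PhiW W ρS = ∫ s in Ioi 0, RAux.Psi W (cdf ρS s) := by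
      rw [PhiW, ← heqS]
      congr 1
      funext r
      rw [RAux.Wc_eq W ⟨RAux.cdf_nonneg r, RAux.cdf_le_one r⟩]
    have hPhi0 : PhiW W ρ0 = ∫ s in Ioi 0, RAux.Psi W (cdf ρ0 s) := by
      rw [PhiW, ← heq0]
      congr 1
      funext r
      rw [RAux.Wc_eq W ⟨RAux.cdf_nonneg r, RAux.cdf_le_one r⟩]
    have hdiffint : IntegrableOn (fun s => RAux.Psi W (cdf ρS s) - RAux.Psi W (cdf ρ0 s))
        (Ioi 0) volume := hintS.sub hint0
    have hdiff : PhiW W ρS - PhiW W ρ0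
        = ∫ s in Ioi 0, (RAux.Psi W (cdf ρS s) - RAux.Psi W (cdf ρ0 s)) := by
      rw [hPhiS, hPhi0, integral_sub hintS hint0]
    -- split the integral
    have hsplit : ∫ s in Ioi 0, (RAux.Psi W (cdf ρS s) - RAux.Psi W (cdf ρ0 s))
        = (∫ s in Ioc 0 rstar, (RAux.Psi W (cdf ρS s) - RAux.Psi W (cdf ρ0 s)))
          + ∫ s in Ioi rstar, (RAux.Psi W (cdf ρS s) - RAux.Psi W (cdf ρ0 s)) := by
      rw [← setIntegral_union (Ioc_disjoint_Ioi le_rfl) measurableSet_Ioi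
        (hdiffint.mono_set Ioc_subset_Ioi_self) (hdiffint.mono_set (Ioi_subset_Ioi hrstar.le)),
        Ioc_union_Ioi_eq_Ioi hrstar.le]
    have htail : 0 ≤ ∫ s in Ioi rstar, (RAux.Psi W (cdf ρS s) - RAux.Psi W (cdf ρ0 s)) := by
      refine setIntegral_nonneg measurableSet_Ioi (fun s hs => ?_)
      have h0 : RAux.Psi W (cdf ρ0 s) = 0 :=
        RAux.Psi_zero W hWnn hζ1 hWzero (RAux.cdf_mono (le_of_lt hs))
      rw [h0, sub_zero]
      exact RAux.Psi_nonneg W hWnn _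
    -- pointwise bound on (0, rstar]
    have hpw : ∀ s ∈ Ioc (0:ℝ) rstar,
        (1 - c) * (cdf ρ0 s * RAux.Wc W (cdf ρ0 s))
          ≤ RAux.Psi W (cdf ρS s) - RAux.Psi W (cdf ρ0 s) := by
      intro s hs
      have h1 : RAux.Psi W (c * cdf ρ0 s) ≤ RAux.Psi W (cdf ρS s) :=
        RAux.Psi_anti W hWanti hWnn (hkey s hs)
      have h2 := RAux.Psi_gap W hWanti hWnn (RAux.cdf_nonneg (ρ := ρ0) s) (RAux.cdf_le_one (ρ := ρ0) s) hc0.le hc1.le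
      linarith
    -- integrability of the lower bound
    have hlbm : Measurable (fun s : ℝ => cdf ρ0 s * RAux.Wc W (cdf ρ0 s)) :=
      RAux.cdf_measurable.mul (((RAux.Wc_anti W hWanti).measurable).comp RAux.cdf_measurable)
    have hlbint : ∀ a b : ℝ, IntegrableOn (fun s : ℝ => cdf ρ0 s * RAux.Wc W (cdf ρ0 s))
        (Ioc a b) volume := by
      intro a b
      refine Integrable.mono' (g := fun _ => RAux.Wc W 0)
        (integrableOn_const (by simp)) hlbm.aestronglyMeasurable.restrict ?_
      refine Filter.Eventually.of_forall fun s => ?_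
      have hn1 : 0 ≤ RAux.Wc W (cdf ρ0 s) := RAux.Wc_nonneg W hWnn _
      have hn2 : RAux.Wc W (cdf ρ0 s) ≤ RAux.Wc W 0 := RAux.Wc_anti W hWanti (RAux.cdf_nonneg s)
      have : ‖cdf ρ0 s * RAux.Wc W (cdf ρ0 s)‖ = cdf ρ0 s * RAux.Wc W (cdf ρ0 s) := by
        rw [Real.norm_eq_abs, abs_of_nonneg (mul_nonneg (RAux.cdf_nonneg s) hn1)]
      rw [this]
      nlinarith [RAux.cdf_nonneg (ρ := ρ0) s, RAux.cdf_le_one (ρ := ρ0) s]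
    -- IFmax as a set integral
    have hIF : IFmax W ρ0 ζ = ∫ s in Ioc 0 q, cdf ρ0 s * RAux.Wc W (cdf ρ0 s) := by
      rw [IFmax, intervalIntegral.integral_of_le hq0]
      refine setIntegral_congr_fun measurableSet_Ioc (fun s _ => ?_)
      show W (cdf ρ0 s) * cdf ρ0 s = cdf ρ0 s * RAux.Wc W (cdf ρ0 s)
      rw [RAux.Wc_eq W ⟨RAux.cdf_nonneg s, RAux.cdf_le_one s⟩, mul_comm]
    have hIFle : IFmax W ρ0 ζ ≤ ∫ s in Ioc 0 rstar, cdf ρ0 s * RAux.Wc W (cdf ρ0 s) := by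
      rw [hIF]
      refine setIntegral_mono_set (hlbint 0 rstar)
        (Filter.Eventually.of_forall fun s =>
          mul_nonneg (RAux.cdf_nonneg s) (RAux.Wc_nonneg W hWnn _)) ?_
      exact HasSubset.Subset.eventuallyLE (Ioc_subset_Ioc_right hqr)
    have hmid : (1 - c) * IFmax W ρ0 ζ
        ≤ ∫ s in Ioc 0 rstar, (RAux.Psi W (cdf ρS s) - RAux.Psi W (cdf ρ0 s)) := by
      have h1 : ∫ s in Ioc 0 rstar, (1 - c) * (cdf ρ0 s * RAux.Wc W (cdf ρ0 s))
          ≤ ∫ s in Ioc 0 rstar, (RAux.Psi W (cdf ρS s) - RAux.Psi W (cdf ρ0 s)) :=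
        setIntegral_mono_on ((hlbint 0 rstar).const_mul _)
          (hdiffint.mono_set Ioc_subset_Ioi_self) measurableSet_Ioc hpw
      have h2 : ∫ s in Ioc 0 rstar, (1 - c) * (cdf ρ0 s * RAux.Wc W (cdf ρ0 s))
          = (1 - c) * ∫ s in Ioc 0 rstar, cdf ρ0 s * RAux.Wc W (cdf ρ0 s) :=
        integral_const_mul _ _
      have h3 : (1 - c) * IFmax W ρ0 ζ
          ≤ (1 - c) * ∫ s in Ioc 0 rstar, cdf ρ0 s * RAux.Wc W (cdf ρ0 s) :=
        mul_le_mul_of_nonneg_left hIFle (by linarith)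
      linarith
    rw [hdiff, hsplit]
    linarith
  constructor
  · intro S hS hlt
    by_contra hcon
    push_neg at hcon
    have := main S hS hcon
    linarith
  · intro hIFpos Sdag hSdag hmin
    by_contra hcon
    push_neg at hcon
    have h1 := main Sdag hSdag hcon
    have h2 := hmin S₀ hS₀
    have h3 : (0:ℝ) < (1 - c) * IFmax W ρ0 ζ := mul_pos (by linarith) hIFpos
    linarith
end
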